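/- Let (M,U_M) and (N,U_N) be cells of Schurian representations of Q such that Hom(M(λ),N(μ)) = 0 for all (λ,μ) ∈ U_M × U_N, and let U_{N,M} ⊆ R(N,M) be a linear subspace which is universal for (U_M,U_N) (i.e. π_{N(μ),M(λ)} is injective on U_{N,M} for all (λ,μ) ∈ U_M × U_N), with basis {e_1, …, e_n}. Fix 1 ≤ d ≤ n and let (f_1, …, f_d) be the standard basis of k^d. For each strictly increasing sequence I = (i_1 < … < i_d) in {1,…,n}, let B_I be the middle term of the extension of N by M ⊗ k^d determined by Σ_{j=1}^d e_{i_j} ⊗ f_j, and let A_I := { Σ_{j=1}^d Σ_{k=1}^{i_j − 1} a_{j,k}·(e_k ⊗ f_j) : a_{j,k} ∈ k, with a_{l,i_k} = 0 for all k,l } ⊆ U_{N,M} ⊗ k^d (the Schubert cell). Then for each I, the set of parameters { (τ, λ ⊗ id_{k^d}, μ) : τ ∈ A_I, λ ∈ U_M, μ ∈ U_N } defines a cell of indecomposable representations C_I = (B_I, {(τ, λ⊗id, μ)}) of dimension vector d·(dim M) + dim N: every representation B_I(τ, λ⊗id_{k^d}, μ) (the representation with underlying spaces (M⊗k^d)_q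 ⊕ N_q and arrow maps [[(M(λ)⊗k^d)_a, (Σ_j e_{i_j}⊗f_j + τ)_a],[0, N(μ)_a]]) is indecomposable; two such representations are isomorphic only if their parameters agree; dim C_I = dim U_M + dim U_N + dim A_I; and the collection {C_I}_I over all strictly increasing sequences I is a mosaic of indecomposable representations, i.e. B_I(τ,λ⊗id,μ) ≅ B_{I'}(τ',λ'⊗id,μ') implies I = I'. -/

import Mathlib

namespace QuivRep

variable (k : Type) [Field k] {V A : Type} (s t : A → V)

/-- `RSp k s t X Y` is R(N,M) = ⊕_{a∈Q_1} Hom_k(N_{s(a)}, M_{t(a)}) where the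
representation `N` has vertex spaces `X` and `M` has vertex spaces `Y`. -/
abbrev RSp (X Y : V → Type) [∀ q, AddCommGroup (X q)] [∀ q, Module k (X q)]
    [∀ q, AddCommGroup (Y q)] [∀ q, Module k (Y q)] : Type :=
  ∀ a : A, X (s a) →ₗ[k] Y (t a)

variable {X Y : V → Type}
  [∀ q, AddCommGroup (X q)] [∀ q, Module k (X q)]
  [∀ q, AddCommGroup (Y q)] [∀ q, Module k (Y q)]

/-- The linear map `d_{N,M}` whose cokernel is Ext(N,M). Here `Nm` are the arrow
maps of `N` (on spaces `X`) and `Mm` those of `M` (on spaces `Y`). -/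
def dMap (Nm : RSp k s t X X) (Mm : RSp k s t Y Y) :
    (∀ q, X q →ₗ[k] Y q) →ₗ[k] RSp k s t X Y where
  toFun f := fun a => (f (t a)).comp (Nm a) - (Mm a).comp (f (s a))
  map_add' f g := by
    funext a; ext x
    simp only [Pi.add_apply, LinearMap.add_comp, LinearMap.comp_add, LinearMap.sub_apply,
      LinearMap.add_apply, LinearMap.comp_apply]
    abel
  map_smul' c f := by
    funext a; ext x
    simp [smul_sub]

/-- `f : M → N` is a morphism of representations (`M` on spaces `X`, `N` on spaces `Y`). -/
def IsRHom (Mm : RSp k s t X X) (Nm : RSp k s t Y Y) (f : ∀ q, X q →ₗ[k] Y q) : Prop :=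
  ∀ a, (f (t a)).comp (Mm a) = (Nm a).comp (f (s a))

/-- Isomorphism of representations. -/
def RIso (Mm : RSp k s t X X) (Nm : RSp k s t Y Y) : Prop :=
  ∃ f : ∀ q, X q →ₗ[k] Y q, IsRHom k s t Mm Nm f ∧ ∀ q, Function.Bijective (f q)

/-- A family of submodules is a subrepresentation. -/
def IsSubRep (Mm : RSp k s t X X) (U : ∀ q, Submodule k (X q)) : Prop :=
  ∀ a, ∀ x ∈ U (s a), Mm a x ∈ U (t a)

/-- Indecomposability: nonzero, and no nontrivial internal direct sum decomposition. -/
def Indec (Mm : RSp k s t X X) : Prop :=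
  (∃ q, ∃ x : X q, x ≠ 0) ∧
  ∀ U W : ∀ q, Submodule k (X q), IsSubRep k s t Mm U → IsSubRep k s t Mm W →
    (∀ q, U q ⊓ W q = ⊥) → (∀ q, U q ⊔ W q = ⊤) →
    (∀ q, U q = ⊥) ∨ (∀ q, W q = ⊥)

/-- The middle term `B(f,λ,μ)` of the extension determined by `f ∈ R(N,M)`:
vertex spaces `Y q × X q`, arrow maps `[[Mm, f],[0, Nm]]`. -/
def BExt (Mm : RSp k s t Y Y) (Nm : RSp k s t X X) (f : RSp k s t X Y) :
    RSp k s t (fun q => Y q × X q) (fun q => Y q × X q) :=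
  fun a => LinearMap.prod
    ((Mm a).comp (LinearMap.fst k (Y (s a)) (X (s a))) +
      (f a).comp (LinearMap.snd k (Y (s a)) (X (s a))))
    ((Nm a).comp (LinearMap.snd k (Y (s a)) (X (s a))))

/-- `U` is strong: every deformation `M(λ)`, `λ ∈ U`, is indecomposable. -/
def Strong (Mm : RSp k s t X X) (U : Set (RSp k s t X X)) : Prop :=
  ∀ lam ∈ U, Indec k s t (Mm + lam)

/-- `U` is separating: `M(λ) ≅ M(μ)` implies `λ = μ` for `λ, μ ∈ U`. -/
def Separating (Mm : RSp k s t X X) (U : Set (RSp k s t X X)) : Prop :=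
  ∀ lam ∈ U, ∀ mu ∈ U, RIso k s t (Mm + lam) (Mm + mu) → lam = mu

/-- `End(M) = k·id`. -/
def EndTrivial (Mm : RSp k s t X X) : Prop :=
  ∀ f : ∀ q, X q →ₗ[k] X q, IsRHom k s t Mm Mm f → ∃ c : k, ∀ q, f q = c • LinearMap.id

/-- `Hom(M,N) = 0`. -/
def HomZero (Mm : RSp k s t X X) (Nm : RSp k s t Y Y) : Prop :=
  ∀ f : ∀ q, X q →ₗ[k] Y q, IsRHom k s t Mm Nm f → f = 0

end QuivRep


open QuivRep

variable {k : Type} [Field k] {V A : Type} [Fintype V] [Fintype A] (s t : A → V)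
variable {X Y : V → Type}
  [∀ q, AddCommGroup (X q)] [∀ q, Module k (X q)] [∀ q, FiniteDimensional k (X q)]
  [∀ q, AddCommGroup (Y q)] [∀ q, Module k (Y q)] [∀ q, FiniteDimensional k (Y q)]

/-- `m ⊗ id_{k^d}` : the `d`-fold diagonal of an element of `R(M,M)`, acting on the
vertex spaces `Fin d → Y q` of `M ⊗ k^d`. -/
def piRep (d : ℕ) (m : RSp k s t Y Y) :
    RSp k s t (fun q => Fin d → Y q) (fun q => Fin d → Y q) :=
  fun a => LinearMap.pi (fun j => (m a).comp (LinearMap.proj j))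

/-- `Σ_{j} e_{I(j)} ⊗ f_j ∈ R(N, M ⊗ k^d)` for a strictly increasing `I`. -/
def EI (n d : ℕ) (e : Fin n → RSp k s t X Y) (I : Fin d → Fin n) :
    RSp k s t X (fun q => Fin d → Y q) :=
  fun a => LinearMap.pi (fun j => e (I j) a)

/-- The Schubert cell
`A_I = { Σ_j Σ_{k < I j} a_{j,k} (e_k ⊗ f_j) : a_{j,k} ∈ k, a_{l, I k} = 0 }`. -/
def AI (n d : ℕ) (e : Fin n → RSp k s t X Y) (I : Fin d → Fin n) :
    Set (RSp k s t X (fun q => Fin d → Y q)) :=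
  {τ | ∃ c : Fin d → Fin n → k,
    (∀ j k', ¬ k' < I j → c j k' = 0) ∧
    (∀ j k', k' ∈ Set.range I → c j k' = 0) ∧
    τ = fun a => LinearMap.pi (fun j => ∑ k', c j k' • e k' a)}

section Aux
set_option linter.unusedSectionVars false

variable {k : Type} [Field k] {V A : Type} [Fintype V] [Fintype A] {s t : A → V}
variable {X Y : V → Type}
  [∀ q, AddCommGroup (X q)] [∀ q, Module k (X q)] [∀ q, FiniteDimensional k (X q)]
  [∀ q, AddCommGroup (Y q)] [∀ q, Module k (Y q)] [∀ q, FiniteDimensional k (Y q)]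

theorem isRHom_comp {Z W U : V → Type}
    [∀ q, AddCommGroup (Z q)] [∀ q, Module k (Z q)]
    [∀ q, AddCommGroup (W q)] [∀ q, Module k (W q)]
    [∀ q, AddCommGroup (U q)] [∀ q, Module k (U q)]
    {P : RSp k s t Z Z} {Q : RSp k s t W W} {R : RSp k s t U U}
    {f : ∀ q, Z q →ₗ[k] W q} {g : ∀ q, W q →ₗ[k] U q}
    (hf : IsRHom k s t P Q f) (hg : IsRHom k s t Q R g) :
    IsRHom k s t P R (fun q => (g q).comp (f q)) := by
  intro a
  ext z
  have h1 := LinearMap.congr_fun (hf a) z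
  have h2 := LinearMap.congr_fun (hg a) (f (s a) z)
  simp only [LinearMap.comp_apply] at h1 h2 ⊢
  rw [h1, h2]

theorem isRHom_inv {Z W : V → Type}
    [∀ q, AddCommGroup (Z q)] [∀ q, Module k (Z q)]
    [∀ q, AddCommGroup (W q)] [∀ q, Module k (W q)]
    {P : RSp k s t Z Z} {Q : RSp k s t W W}
    {f : ∀ q, Z q →ₗ[k] W q} (hf : IsRHom k s t P Q f)
    (hb : ∀ q, Function.Bijective (f q)) :
    IsRHom k s t Q P
      (fun q => ((LinearEquiv.ofBijective (f q) (hb q)).symm : W q →ₗ[k] Z q)) := by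
  intro a
  ext w
  set e1 := LinearEquiv.ofBijective (f (s a)) (hb (s a))
  set e2 := LinearEquiv.ofBijective (f (t a)) (hb (t a))
  have h1 := LinearMap.congr_fun (hf a) (e1.symm w)
  simp only [LinearMap.comp_apply] at h1 ⊢
  have hw : f (s a) (e1.symm w) = w := e1.apply_symm_apply w
  rw [hw] at h1
  rw [← h1]
  exact e2.symm_apply_apply _

theorem rIso_symm {Z W : V → Type}
    [∀ q, AddCommGroup (Z q)] [∀ q, Module k (Z q)]
    [∀ q, AddCommGroup (W q)] [∀ q, Module k (W q)]
    {P : RSp k s t Z Z} {Q : RSp k s t W W}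
    (h : RIso k s t P Q) : RIso k s t Q P := by
  obtain ⟨f, hf, hb⟩ := h
  exact ⟨_, isRHom_inv hf hb, fun q => (LinearEquiv.ofBijective (f q) (hb q)).symm.bijective⟩

theorem piRep_apply {d : ℕ} (m : RSp k s t Y Y) (a : A) (v : Fin d → Y (s a)) (j : Fin d) :
    piRep s t d m a v j = m a (v j) := rfl

theorem piRep_single {d : ℕ} (m : RSp k s t Y Y) (a : A) (i : Fin d) (y : Y (s a)) :
    piRep s t d m a (Pi.single i y) = Pi.single i (m a y) := by
  funext j
  rcases eq_or_ne j i with rfl | hji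
  · simp [piRep_apply]
  · simp [piRep_apply, Pi.single_eq_of_ne hji]

theorem homZero_pi {d : ℕ} {Mp : RSp k s t Y Y} {Np : RSp k s t X X}
    (h : HomZero k s t Mp Np) : HomZero k s t (piRep s t d Mp) Np := by
  intro f hf
  have hj : ∀ (j : Fin d) (q : V),
      (f q).comp (LinearMap.single k (fun _ : Fin d => Y q) j) = 0 := by
    intro j q
    have := h (fun q => (f q).comp (LinearMap.single k (fun _ : Fin d => Y q) j)) ?_
    · exact congrFun this q
    intro a
    ext y
    have h1 := LinearMap.congr_fun (hf a) (Pi.single j y)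
    simp only [LinearMap.comp_apply] at h1 ⊢
    show (f (t a)) (Pi.single j ((Mp a) y)) = (Np a) ((f (s a)) (Pi.single j y))
    rw [← piRep_single, h1]
  funext q
  refine LinearMap.ext fun v => ?_
  have hv : v = ∑ i, Pi.single i (v i) := (Finset.univ_sum_single v).symm
  rw [hv, map_sum]
  simp only [Pi.zero_apply, LinearMap.zero_apply]
  refine Finset.sum_eq_zero fun i _ => ?_
  have := LinearMap.congr_fun (hj i q) (v i)
  simpa using this

theorem endTrivial_pi {d : ℕ} {Mp : RSp k s t Y Y}
    (hEnd : EndTrivial k s t Mp) {α : ∀ q, (Fin d → Y q) →ₗ[k] (Fin d → Y q)}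
    (hα : IsRHom k s t (piRep s t d Mp) (piRep s t d Mp) α) :
    ∃ C : Fin d → Fin d → k, ∀ q (v : Fin d → Y q) (i : Fin d),
      α q v i = ∑ l, C i l • v l := by
  have hmor : ∀ i l : Fin d, IsRHom k s t Mp Mp
      (fun q => (LinearMap.proj i).comp ((α q).comp
        (LinearMap.single k (fun _ : Fin d => Y q) l))) := by
    intro i l a
    ext y
    have h1 := LinearMap.congr_fun (hα a) (Pi.single l y)
    simp only [LinearMap.comp_apply, LinearMap.proj_apply] at h1 ⊢
    show α (t a) (Pi.single l ((Mp a) y)) i = (Mp a) (α (s a) (Pi.single l y) i)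
    rw [← piRep_single, h1]
    rfl
  have hc := fun i l => hEnd _ (hmor i l)
  choose C hC using hc
  refine ⟨C, fun q v i => ?_⟩
  have hv : v = ∑ l, Pi.single l (v l) := (Finset.univ_sum_single v).symm
  conv_lhs => rw [hv, map_sum]
  rw [Finset.sum_apply]
  refine Finset.sum_congr rfl fun l _ => ?_
  have h2 := LinearMap.congr_fun (hC i l q) (v l)
  simpa using h2

end Aux
section Aux2
set_option linter.unusedSectionVars false

variable {k : Type} [Field k]

/-- Coefficients of the row `l` of the matrix `E_I + τ` in the basis `e`. -/
def pcoef {d n : ℕ} (I : Fin d → Fin n) (c : Fin d → Fin n → k) : Fin d → Fin n → k :=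
  fun l m => (if I l = m then 1 else 0) + c l m

theorem pcoef_pivot {d n : ℕ} {I : Fin d → Fin n} (hI : Function.Injective I)
    {c : Fin d → Fin n → k} (hcr : ∀ j m, m ∈ Set.range I → c j m = 0) (l m : Fin d) :
    pcoef I c l (I m) = if l = m then 1 else 0 := by
  unfold pcoef
  rw [hcr l (I m) ⟨m, rfl⟩, add_zero]
  simp [hI.eq_iff]

theorem pcoef_hi {d n : ℕ} {I : Fin d → Fin n}
    {c : Fin d → Fin n → k} (hc0 : ∀ j m, ¬ m < I j → c j m = 0) {l : Fin d} {m : Fin n}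
    (h : ¬ m ≤ I l) : pcoef I c l m = 0 := by
  unfold pcoef
  have h1 : I l ≠ m := fun hh => h (le_of_eq hh.symm)
  have h2 : ¬ m < I l := fun hh => h hh.le
  rw [hc0 l m h2, if_neg h1, add_zero]

theorem pivot_sum {d n : ℕ} {I : Fin d → Fin n} (hI : Function.Injective I)
    {c : Fin d → Fin n → k} (hcr : ∀ j m, m ∈ Set.range I → c j m = 0)
    (C : Fin d → Fin d → k) (j m₀ : Fin d) :
    ∑ l, C j l * pcoef I c l (I m₀) = C j m₀ := by
  rw [Finset.sum_congr rfl (fun l _ => by rw [pcoef_pivot hI hcr l m₀])]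
  simp

theorem range_lemma {d n : ℕ} {I I' : Fin d → Fin n} (hI : StrictMono I) (hI' : StrictMono I')
    {c c'' : Fin d → Fin n → k}
    (hc0 : ∀ j m, ¬ m < I j → c j m = 0) (hcr : ∀ j m, m ∈ Set.range I → c j m = 0)
    (hc0' : ∀ j m, ¬ m < I' j → c'' j m = 0) (hcr' : ∀ j m, m ∈ Set.range I' → c'' j m = 0)
    {C : Fin d → Fin d → k} {c' : k} (hc' : c' ≠ 0)
    (hrel : ∀ j m, ∑ l, C j l * pcoef I c l m = c' * pcoef I' c'' j m) :
    ∀ j, I' j ∈ Set.range I := by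
  intro j
  have hpiv' : pcoef I' c'' j (I' j) = 1 := by
    rw [pcoef_pivot hI'.injective hcr' j j, if_pos rfl]
  have hS : ∃ l, C j l ≠ 0 := by
    by_contra hall
    push_neg at hall
    have h := hrel j (I' j)
    rw [hpiv', mul_one] at h
    exact hc' (by rw [← h]; exact Finset.sum_eq_zero fun l _ => by rw [hall l, zero_mul])
  classical
  set S : Finset (Fin d) := Finset.univ.filter (fun l => C j l ≠ 0) with hSdef
  have hSne : S.Nonempty := by
    obtain ⟨l, hl⟩ := hS
    exact ⟨l, by simp [hSdef, hl]⟩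
  set lstar := S.max' hSne with hlstar
  have hlstarS : C j lstar ≠ 0 := by
    have := S.max'_mem hSne
    simp [hSdef] at this
    exact this
  have hle : I lstar ≤ I' j := by
    by_contra h
    have h2 := hrel j (I lstar)
    rw [pivot_sum hI.injective hcr] at h2
    rw [pcoef_hi hc0' h, mul_zero] at h2
    exact hlstarS h2
  have h3 := hrel j (I' j)
  rw [hpiv', mul_one] at h3
  have hex : ∃ l, C j l * pcoef I c l (I' j) ≠ 0 := by
    by_contra hall
    push_neg at hall
    exact hc' (by rw [← h3]; exact Finset.sum_eq_zero fun l _ => hall l)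
  obtain ⟨l, hl⟩ := hex
  have hCl : C j l ≠ 0 := fun h => hl (by rw [h, zero_mul])
  have hpl : pcoef I c l (I' j) ≠ 0 := fun h => hl (by rw [h, mul_zero])
  have h4 : I' j ≤ I l := by
    by_contra h
    exact hpl (pcoef_hi hc0 h)
  have h5 : l ≤ lstar := S.le_max' l (by simp [hSdef, hCl])
  have h6 : I l ≤ I' j := le_trans (hI.monotone h5) hle
  exact ⟨l, le_antisymm h6 h4⟩

end Aux2
section Aux3
set_option linter.unusedSectionVars false

variable {k : Type} [Field k] {V A : Type} [Fintype V] [Fintype A] {s t : A → V}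
variable {X Y : V → Type}
  [∀ q, AddCommGroup (X q)] [∀ q, Module k (X q)] [∀ q, FiniteDimensional k (X q)]
  [∀ q, AddCommGroup (Y q)] [∀ q, Module k (Y q)] [∀ q, FiniteDimensional k (Y q)]

theorem pi_iso_cancel {d : ℕ} (hd : 0 < d) {Mp Mp' : RSp k s t Y Y}
    (hEnd : EndTrivial k s t Mp) (hnz : ∃ q, ∃ y : Y q, y ≠ 0)
    {α : ∀ q, (Fin d → Y q) →ₗ[k] (Fin d → Y q)}
    (hα : IsRHom k s t (piRep s t d Mp) (piRep s t d Mp') α)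
    (hb : ∀ q, Function.Bijective (α q)) :
    RIso k s t Mp Mp' := by
  set i₀ : Fin d := ⟨0, hd⟩
  set α' : ∀ q, (Fin d → Y q) →ₗ[k] (Fin d → Y q) :=
    fun q => ((LinearEquiv.ofBijective (α q) (hb q)).symm : (Fin d → Y q) →ₗ[k] (Fin d → Y q))
    with hα'def
  have hα' : IsRHom k s t (piRep s t d Mp') (piRep s t d Mp) α' := isRHom_inv hα hb
  set w : Fin d → ∀ q, Y q →ₗ[k] Y q := fun j q =>
    (LinearMap.proj j).comp ((α q).comp (LinearMap.single k (fun _ : Fin d => Y q) i₀))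
    with hwdef
  set u : Fin d → ∀ q, Y q →ₗ[k] Y q := fun j q =>
    (LinearMap.proj i₀).comp ((α' q).comp (LinearMap.single k (fun _ : Fin d => Y q) j))
    with hudef
  have hw : ∀ j, IsRHom k s t Mp Mp' (w j) := by
    intro j a
    ext y
    have h1 := LinearMap.congr_fun (hα a) (Pi.single i₀ y)
    simp only [LinearMap.comp_apply, LinearMap.proj_apply] at h1 ⊢
    show α (t a) (Pi.single i₀ ((Mp a) y)) j = (Mp' a) (α (s a) (Pi.single i₀ y) j)
    rw [← piRep_single, h1]
    rfl
  have hu : ∀ j, IsRHom k s t Mp' Mp (u j) := by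
    intro j a
    ext y
    have h1 := LinearMap.congr_fun (hα' a) (Pi.single j y)
    simp only [LinearMap.comp_apply, LinearMap.proj_apply] at h1 ⊢
    show α' (t a) (Pi.single j ((Mp' a) y)) i₀ = (Mp a) (α' (s a) (Pi.single j y) i₀)
    rw [← piRep_single, h1]
    rfl
  have hcs := fun j => hEnd _ (isRHom_comp (hw j) (hu j))
  choose cs hcs using hcs
  have hsum : ∀ q (y : Y q), ∑ j, u j q (w j q y) = y := by
    intro q y
    have h1 : ∀ j, u j q (w j q y) = α' q (Pi.single j (α q (Pi.single i₀ y) j)) i₀ := by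
      intro j; rfl
    have h2 : ∑ j, α' q (Pi.single j (α q (Pi.single i₀ y) j)) i₀
        = α' q (∑ j, Pi.single j (α q (Pi.single i₀ y) j)) i₀ := by
      rw [map_sum, Finset.sum_apply]
    have h3 : (∑ j, Pi.single j (α q (Pi.single i₀ y) j)) = α q (Pi.single i₀ y) :=
      Finset.univ_sum_single _
    have h4 : α' q (α q (Pi.single i₀ y)) = Pi.single i₀ y :=
      (LinearEquiv.ofBijective (α q) (hb q)).symm_apply_apply _
    simp only [h1, h2, h3, h4, Pi.single_eq_same]
  obtain ⟨q₀, y₀, hy₀⟩ := hnz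
  have hsum1 : (∑ j, cs j) = 1 := by
    have h1 : (∑ j, cs j) • y₀ = y₀ := by
      rw [Finset.sum_smul]
      conv_rhs => rw [← hsum q₀ y₀]
      refine Finset.sum_congr rfl fun j _ => ?_
      have h2 := LinearMap.congr_fun (hcs j q₀) y₀
      simp only [LinearMap.comp_apply, LinearMap.smul_apply, LinearMap.id_apply] at h2
      exact h2.symm
    have h2 : ((∑ j, cs j) - 1) • y₀ = 0 := by rw [sub_smul, one_smul, h1, sub_self]
    rcases smul_eq_zero.1 h2 with h | h
    · exact sub_eq_zero.1 h
    · exact absurd h hy₀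
  have hex : ∃ j, cs j ≠ 0 := by
    by_contra hall
    push_neg at hall
    rw [Finset.sum_eq_zero (fun j _ => hall j)] at hsum1
    exact zero_ne_one hsum1
  obtain ⟨j, hj⟩ := hex
  refine ⟨w j, hw j, fun q => ?_⟩
  have hinj : Function.Injective (w j q) := by
    intro y y' hyy
    have h1 := LinearMap.congr_fun (hcs j q) y
    have h2 := LinearMap.congr_fun (hcs j q) y'
    simp only [LinearMap.comp_apply, LinearMap.smul_apply, LinearMap.id_apply] at h1 h2
    have : cs j • y = cs j • y' := by rw [← h1, ← h2, hyy]
    exact smul_right_injective _ hj this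
  exact ⟨hinj, LinearMap.injective_iff_surjective.1 hinj⟩

end Aux3
section Aux4
set_option linter.unusedSectionVars false
set_option maxHeartbeats 1000000

variable {k : Type} [Field k] {V A : Type} [Fintype V] [Fintype A] {s t : A → V}
variable {X Y : V → Type}
  [∀ q, AddCommGroup (X q)] [∀ q, Module k (X q)] [∀ q, FiniteDimensional k (X q)]
  [∀ q, AddCommGroup (Y q)] [∀ q, Module k (Y q)] [∀ q, FiniteDimensional k (Y q)]
variable {Mm : RSp k s t Y Y} {Nm : RSp k s t X X}
variable {UM : Submodule k (RSp k s t Y Y)} {UN : Submodule k (RSp k s t X X)}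
variable {UNM : Submodule k (RSp k s t X Y)}
variable {n d : ℕ} {e : Fin n → RSp k s t X Y}

theorem sum_smul_apply (b : Fin n → k) (a : A) (x : X (s a)) :
    (∑ m, b m • e m) a x = ∑ m, b m • e m a x := by
  rw [Finset.sum_apply]
  rw [LinearMap.sum_apply]
  simp

theorem FApply {I : Fin d → Fin n} {c : Fin d → Fin n → k}
    {tau : RSp k s t X (fun q => Fin d → Y q)}
    (hτ : tau = fun a => LinearMap.pi (fun j => ∑ m, c j m • e m a))
    (a : A) (x : X (s a)) (j : Fin d) :
    ((EI s t n d e I + tau) a x) j = ∑ m, pcoef I c j m • e m a x := by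
  subst hτ
  simp only [Pi.add_apply, LinearMap.add_apply, EI, LinearMap.pi_apply, LinearMap.sum_apply,
    LinearMap.smul_apply]
  unfold pcoef
  simp only [add_smul, Finset.sum_add_distrib, ite_smul, one_smul, zero_smul]
  congr 1
  rw [Finset.sum_ite_eq]
  simp

theorem hom_analysis
    (huniv : ∀ lam ∈ UM, ∀ mu ∈ UN, ∀ tau ∈ UNM, ∀ tau' ∈ UNM,
      tau - tau' ∈ LinearMap.range (dMap k s t (Nm + mu) (Mm + lam)) → tau = tau')
    (hli : LinearIndependent k e) (hsp : Submodule.span k (Set.range e) = UNM)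
    {lam : RSp k s t Y Y} {mu : RSp k s t X X} (hlam : lam ∈ UM) (hmu : mu ∈ UN)
    (hSchM : EndTrivial k s t (Mm + lam)) (hSchN : EndTrivial k s t (Nm + mu))
    (hHom0 : HomZero k s t (Mm + lam) (Nm + mu))
    {I I' : Fin d → Fin n} {c c'' : Fin d → Fin n → k}
    {tau tau' : RSp k s t X (fun q => Fin d → Y q)}
    (hτ : tau = fun a => LinearMap.pi (fun j => ∑ m, c j m • e m a))
    (hτ' : tau' = fun a => LinearMap.pi (fun j => ∑ m, c'' j m • e m a))
    {φ : ∀ q, ((Fin d → Y q) × X q) →ₗ[k] ((Fin d → Y q) × X q)}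
    (hφ : IsRHom k s t
      (BExt k s t (piRep s t d (Mm + lam)) (Nm + mu) (EI s t n d e I + tau))
      (BExt k s t (piRep s t d (Mm + lam)) (Nm + mu) (EI s t n d e I' + tau')) φ) :
    ∃ (C : Fin d → Fin d → k) (c' : k),
      (∀ q (y : Fin d → Y q) (x : X q),
        φ q (y, x) = (fun i => (∑ l, C i l • y l) + (φ q (0, x)).1 i, c' • x)) ∧
      (∀ j m, ∑ l, C j l * pcoef I c l m = c' * pcoef I' c'' j m) := by
  set P : RSp k s t (fun q => Fin d → Y q) (fun q => Fin d → Y q) :=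
    piRep s t d (Mm + lam) with hPdef
  set Nn : RSp k s t X X := Nm + mu with hNndef
  set F : RSp k s t X (fun q => Fin d → Y q) := EI s t n d e I + tau with hFdef
  set F' : RSp k s t X (fun q => Fin d → Y q) := EI s t n d e I' + tau' with hF'def
  set Aφ : ∀ q, (Fin d → Y q) →ₗ[k] (Fin d → Y q) := fun q =>
    (LinearMap.fst k _ _).comp ((φ q).comp (LinearMap.inl k _ _)) with hAdef
  set Bφ : ∀ q, X q →ₗ[k] (Fin d → Y q) := fun q =>
    (LinearMap.fst k _ _).comp ((φ q).comp (LinearMap.inr k _ _)) with hBdef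
  set Cφ : ∀ q, (Fin d → Y q) →ₗ[k] X q := fun q =>
    (LinearMap.snd k _ _).comp ((φ q).comp (LinearMap.inl k _ _)) with hCdef
  set Dφ : ∀ q, X q →ₗ[k] X q := fun q =>
    (LinearMap.snd k _ _).comp ((φ q).comp (LinearMap.inr k _ _)) with hDdef
  have hdec : ∀ q (y : Fin d → Y q) (x : X q),
      φ q (y, x) = (Aφ q y + Bφ q x, Cφ q y + Dφ q x) := by
    intro q y x
    have h : ((y, x) : (Fin d → Y q) × X q) = (y, 0) + (0, x) := by simp
    rw [h, map_add]
    rfl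
  have hrel : ∀ a (z : (Fin d → Y (s a)) × X (s a)),
      φ (t a) (P a z.1 + F a z.2, Nn a z.2)
        = (P a (φ (s a) z).1 + F' a (φ (s a) z).2, Nn a (φ (s a) z).2) := by
    intro a z
    exact LinearMap.congr_fun (hφ a) z
  have hrel1 : ∀ a (y : Fin d → Y (s a)),
      (Aφ (t a)) (P a y) = P a (Aφ (s a) y) + F' a (Cφ (s a) y)
        ∧ (Cφ (t a)) (P a y) = Nn a (Cφ (s a) y) := by
    intro a y
    have h := hrel a (y, 0)
    simp only [map_zero, add_zero] at h
    rw [hdec (s a) y 0, hdec (t a) (P a y) 0] at h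
    simp only [map_zero, add_zero] at h
    exact ⟨congrArg Prod.fst h, congrArg Prod.snd h⟩
  have hCmor : IsRHom k s t P Nn Cφ := by
    intro a
    refine LinearMap.ext fun y => ?_
    exact (hrel1 a y).2
  have hC0 : ∀ q, Cφ q = 0 := by
    have h := homZero_pi hHom0 Cφ hCmor
    exact fun q => congrFun h q
  have hrel2 : ∀ a (x : X (s a)),
      ((Aφ (t a)) (F a x) + (Bφ (t a)) (Nn a x) = P a (Bφ (s a) x) + F' a (Dφ (s a) x))
        ∧ (Dφ (t a)) (Nn a x) = Nn a (Dφ (s a) x) := by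
    intro a x
    have h := hrel a (0, x)
    simp only [map_zero, zero_add] at h
    rw [hdec (s a) 0 x, hdec (t a) (F a x) (Nn a x)] at h
    simp only [map_zero, zero_add, hC0, LinearMap.zero_apply] at h
    exact ⟨congrArg Prod.fst h, congrArg Prod.snd h⟩
  have hDmor : IsRHom k s t Nn Nn Dφ := by
    intro a
    refine LinearMap.ext fun x => ?_
    exact (hrel2 a x).2
  obtain ⟨c', hc'⟩ := hSchN Dφ hDmor
  have hDx : ∀ q (x : X q), Dφ q x = c' • x := by
    intro q x
    rw [hc' q]
    rfl
  have hAmor : IsRHom k s t P P Aφ := by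
    intro a
    refine LinearMap.ext fun y => ?_
    have h := (hrel1 a y).1
    rw [hC0, LinearMap.zero_apply, map_zero, add_zero] at h
    exact h
  obtain ⟨C, hCmat⟩ := endTrivial_pi hSchM hAmor
  refine ⟨C, c', ?_, ?_⟩
  · intro q y x
    rw [hdec q y x, hC0, LinearMap.zero_apply, zero_add, hDx]
    have h1 : (φ q (0, x)).1 = Bφ q x := by
      rw [hdec q 0 x]
      simp
    rw [h1]
    simp only [Prod.mk.injEq]
    refine ⟨?_, trivial⟩
    funext i
    rw [Pi.add_apply, hCmat]
  · intro j m
    set Bj : ∀ q, X q →ₗ[k] Y q := fun q => (LinearMap.proj j).comp (Bφ q) with hBjdef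
    set uu : RSp k s t X Y := ∑ m, (c' * pcoef I' c'' j m) • e m with huudef
    set vv : RSp k s t X Y := ∑ m, (∑ l, C j l * pcoef I c l m) • e m with hvvdef
    have he : ∀ m, e m ∈ UNM := fun m => hsp ▸ Submodule.subset_span ⟨m, rfl⟩
    have hu : uu ∈ UNM := Submodule.sum_mem _ fun m _ => Submodule.smul_mem _ _ (he m)
    have hv : vv ∈ UNM := Submodule.sum_mem _ fun m _ => Submodule.smul_mem _ _ (he m)
    have hE3j : ∀ a (x : X (s a)),
        (∑ l, C j l • (F a x) l) + Bj (t a) (Nn a x)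
          = (Mm + lam) a (Bj (s a) x) + c' • (F' a x) j := by
      intro a x
      have h := congrFun ((hrel2 a x).1) j
      simp only [Pi.add_apply] at h
      rw [hCmat (t a) (F a x) j] at h
      have h2 : (P a (Bφ (s a) x)) j = (Mm + lam) a ((Bφ (s a) x) j) := rfl
      have h3 : (F' a (Dφ (s a) x)) j = c' • (F' a x) j := by
        rw [hDx (s a) x, map_smul, Pi.smul_apply]
      rw [h2, h3] at h
      exact h
    have hua : ∀ a (x : X (s a)), uu a x = c' • (F' a x) j := by
      intro a x
      rw [huudef, sum_smul_apply, hF'def, FApply hτ' a x j, Finset.smul_sum]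
      exact Finset.sum_congr rfl fun m _ => by rw [smul_smul]
    have hva : ∀ a (x : X (s a)), vv a x = ∑ l, C j l • (F a x) l := by
      intro a x
      rw [hvvdef, sum_smul_apply]
      have h1 : ∀ m, (∑ l, C j l * pcoef I c l m) • e m a x
          = ∑ l, C j l • (pcoef I c l m • e m a x) := by
        intro m
        rw [Finset.sum_smul]
        exact Finset.sum_congr rfl fun l _ => (smul_smul _ _ _).symm
      rw [Finset.sum_congr rfl fun m _ => h1 m, Finset.sum_comm]
      refine Finset.sum_congr rfl fun l _ => ?_
      rw [← Finset.smul_sum, hFdef, FApply hτ a x l]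
    have hdiff : uu - vv = dMap k s t Nn (Mm + lam) Bj := by
      funext a
      refine LinearMap.ext fun x => ?_
      have h1 : (uu - vv) a x = uu a x - vv a x := rfl
      have h2 : dMap k s t Nn (Mm + lam) Bj a x
          = Bj (t a) (Nn a x) - (Mm + lam) a (Bj (s a) x) := rfl
      rw [h1, h2, hua, hva]
      have h := hE3j a x
      have h4 : c' • (F' a x) j = (∑ l, C j l • (F a x) l) + Bj (t a) (Nn a x)
          - (Mm + lam) a (Bj (s a) x) := by
        rw [eq_sub_iff_add_eq, h]
        abel
      rw [h4]
      abel
    have huv : uu = vv := huniv lam hlam mu hmu uu hu vv hv ⟨Bj, hdiff.symm⟩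
    have hcoef := Fintype.linearIndependent_iff.1 hli
      (fun m => (∑ l, C j l * pcoef I c l m) - c' * pcoef I' c'' j m) ?_ m
    · exact sub_eq_zero.1 hcoef
    · simp only [sub_smul, Finset.sum_sub_distrib]
      rw [← hvvdef, ← huudef, huv, sub_self]

end Aux4
section Aux5
set_option linter.unusedSectionVars false
set_option maxHeartbeats 1000000

variable {k : Type} [Field k] {V A : Type} [Fintype V] [Fintype A] {s t : A → V}
variable {X Y : V → Type}
  [∀ q, AddCommGroup (X q)] [∀ q, Module k (X q)] [∀ q, FiniteDimensional k (X q)]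
  [∀ q, AddCommGroup (Y q)] [∀ q, Module k (Y q)] [∀ q, FiniteDimensional k (Y q)]
variable {Mm : RSp k s t Y Y} {Nm : RSp k s t X X}
variable {UM : Submodule k (RSp k s t Y Y)} {UN : Submodule k (RSp k s t X X)}
variable {UNM : Submodule k (RSp k s t X Y)}
variable {n d : ℕ} {e : Fin n → RSp k s t X Y}

theorem indec_of
    (huniv : ∀ lam ∈ UM, ∀ mu ∈ UN, ∀ tau ∈ UNM, ∀ tau' ∈ UNM,
      tau - tau' ∈ LinearMap.range (dMap k s t (Nm + mu) (Mm + lam)) → tau = tau')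
    (hli : LinearIndependent k e) (hsp : Submodule.span k (Set.range e) = UNM)
    {lam : RSp k s t Y Y} {mu : RSp k s t X X} (hlam : lam ∈ UM) (hmu : mu ∈ UN)
    (hSchM : EndTrivial k s t (Mm + lam)) (hSchN : EndTrivial k s t (Nm + mu))
    (hHom0 : HomZero k s t (Mm + lam) (Nm + mu))
    (hnzX : ∃ q, ∃ x : X q, x ≠ 0)
    {I : Fin d → Fin n} (hI : StrictMono I)
    {c : Fin d → Fin n → k} (hcr : ∀ j m, m ∈ Set.range I → c j m = 0)
    {tau : RSp k s t X (fun q => Fin d → Y q)}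
    (hτ : tau = fun a => LinearMap.pi (fun j => ∑ m, c j m • e m a)) :
    Indec k s t (BExt k s t (piRep s t d (Mm + lam)) (Nm + mu) (EI s t n d e I + tau)) := by
  obtain ⟨q₀, x₀, hx₀⟩ := hnzX
  constructor
  · exact ⟨q₀, (0, x₀), fun h => hx₀ (congrArg Prod.snd h)⟩
  intro U W hU hW hinf hsup
  set B : RSp k s t (fun q => (Fin d → Y q) × X q) (fun q => (Fin d → Y q) × X q) :=
    BExt k s t (piRep s t d (Mm + lam)) (Nm + mu) (EI s t n d e I + tau) with hBdef
  have hcompl : ∀ q, IsCompl (U q) (W q) :=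
    fun q => ⟨disjoint_iff.2 (hinf q), codisjoint_iff.2 (hsup q)⟩
  set φ : ∀ q, ((Fin d → Y q) × X q) →ₗ[k] ((Fin d → Y q) × X q) :=
    fun q => ((U q).subtype).comp ((U q).projectionOnto (W q) (hcompl q)) with hφdef
  have hmem : ∀ q z, φ q z ∈ U q := fun q z =>
    ((U q).projectionOnto (W q) (hcompl q) z).2
  have hφu : ∀ q z, z ∈ U q → φ q z = z := by
    intro q z hz
    exact congrArg Subtype.val (Submodule.projectionOnto_apply_left (hcompl q) ⟨z, hz⟩)
  have hφw : ∀ q z, z ∈ W q → φ q z = 0 := by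
    intro q z hz
    show ((U q).subtype) ((U q).projectionOnto (W q) (hcompl q) z) = 0
    rw [Submodule.linearProjOfIsCompl_apply_right' (hcompl q) hz]
    rfl
  have hidem : ∀ q z, φ q (φ q z) = φ q z := fun q z => hφu q _ (hmem q z)
  have hmor : IsRHom k s t B B φ := by
    intro a
    refine LinearMap.ext fun z => ?_
    have hz : z ∈ U (s a) ⊔ W (s a) := by rw [hsup (s a)]; exact Submodule.mem_top
    obtain ⟨u, hu, w, hw, huw⟩ := Submodule.mem_sup.1 hz
    simp only [LinearMap.comp_apply]
    rw [← huw, map_add, map_add (φ (s a)), map_add,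
      hφu (s a) u hu, hφw (s a) w hw, add_zero,
      hφu (t a) _ (hU a u hu), hφw (t a) _ (hW a w hw), add_zero]
  obtain ⟨C, c', h1, h2⟩ := hom_analysis huniv hli hsp hlam hmu hSchM hSchN hHom0 hτ hτ hmor
  have hC : ∀ j m₀ : Fin d, C j m₀ = if j = m₀ then c' else 0 := by
    intro j m₀
    have h := h2 j (I m₀)
    rw [pivot_sum hI.injective hcr, pcoef_pivot hI.injective hcr] at h
    rw [h, mul_ite, mul_one, mul_zero]
  have hCact : ∀ q (y : Fin d → Y q) (i : Fin d), (∑ l, C i l • y l) = c' • y i := by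
    intro q y i
    rw [Finset.sum_congr rfl fun l _ => by rw [hC i l, ite_smul, zero_smul]]
    rw [Finset.sum_ite_eq]
    simp
  have hform : ∀ q (y : Fin d → Y q) (x : X q),
      φ q (y, x) = (fun i => c' • y i + (φ q (0, x)).1 i, c' • x) := by
    intro q y x
    rw [h1 q y x]
    simp only [Prod.mk.injEq]
    refine ⟨funext fun i => ?_, trivial⟩
    rw [hCact]
  have hsm : ∀ q (x : X q), (φ q (0, c' • x)).1 = c' • (φ q (0, x)).1 := by
    intro q x
    have h3 : ((0, c' • x) : (Fin d → Y q) × X q) = c' • (0, x) := by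
      simp [Prod.smul_mk]
    rw [h3, map_smul]
    rfl
  have hkey : ∀ q (x : X q),
      (fun i => c' • (φ q (0, x)).1 i + c' • (φ q (0, x)).1 i, c' • c' • x)
        = ((φ q (0, x)).1, c' • x) := by
    intro q x
    have h4 := hidem q (0, x)
    have hsnd : (φ q (0, x)).2 = c' • x := by rw [hform q 0 x]
    have h5 : φ q (0, x) = ((φ q (0, x)).1, c' • x) := by
      rw [← hsnd]
    calc (fun i => c' • (φ q (0, x)).1 i + c' • (φ q (0, x)).1 i, c' • c' • x)
        = φ q ((φ q (0, x)).1, c' • x) := by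
          rw [hform q (φ q (0, x)).1 (c' • x), hsm]
          rfl
      _ = φ q (φ q (0, x)) := by rw [← h5]
      _ = φ q (0, x) := hidem q (0, x)
      _ = ((φ q (0, x)).1, c' • x) := h5
  have hc'2 : c' * c' = c' := by
    have h6 := congrArg Prod.snd (hkey q₀ x₀)
    simp only at h6
    rw [smul_smul] at h6
    have h7 : (c' * c' - c') • x₀ = 0 := by rw [sub_smul, h6, sub_self]
    rcases smul_eq_zero.1 h7 with h | h
    · exact sub_eq_zero.1 h
    · exact absurd h hx₀
  have hcc : c' = 0 ∨ c' = 1 := by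
    have h8 : c' * (c' - 1) = 0 := by rw [mul_sub, hc'2, mul_one, sub_self]
    rcases mul_eq_zero.1 h8 with h | h
    · exact Or.inl h
    · exact Or.inr (sub_eq_zero.1 h)
  have hbx : ∀ q (x : X q), (φ q (0, x)).1 = 0 := by
    intro q x
    have h6 := congrArg Prod.fst (hkey q x)
    funext i
    have h9 := congrFun h6 i
    simp only at h9
    rcases hcc with h | h
    · rw [h, zero_smul, zero_add] at h9
      exact h9.symm
    · rw [h, one_smul] at h9
      exact add_eq_right.1 h9
  rcases hcc with h | h
  · left
    intro q
    rw [Submodule.eq_bot_iff]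
    intro z hz
    have h10 := hφu q z hz
    have h11 : φ q z = 0 := by
      rw [show z = (z.1, z.2) from rfl, hform q z.1 z.2, hbx, h]
      refine Prod.ext_iff.2 ⟨funext fun i => by simp, by simp⟩
    rw [← h10, h11]
  · right
    intro q
    rw [Submodule.eq_bot_iff]
    intro z hz
    have h10 := hφw q z hz
    have h11 : φ q z = z := by
      rw [show z = (z.1, z.2) from rfl, hform q z.1 z.2, hbx, h]
      refine Prod.ext_iff.2 ⟨funext fun i => by simp, by simp⟩
    rw [← h11, h10]

end Aux5
section Aux6
set_option linter.unusedSectionVars false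
set_option maxHeartbeats 1000000

variable {k : Type} [Field k] {V A : Type} [Fintype V] [Fintype A] {s t : A → V}
variable {X Y : V → Type}
  [∀ q, AddCommGroup (X q)] [∀ q, Module k (X q)] [∀ q, FiniteDimensional k (X q)]
  [∀ q, AddCommGroup (Y q)] [∀ q, Module k (Y q)] [∀ q, FiniteDimensional k (Y q)]
variable {Mm : RSp k s t Y Y} {Nm : RSp k s t X X}
variable {n d : ℕ} {e : Fin n → RSp k s t X Y}

theorem iso_pre
    {lam lam' : RSp k s t Y Y} {mu mu' : RSp k s t X X}
    (hSchM : EndTrivial k s t (Mm + lam))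
    (hHom0 : HomZero k s t (Mm + lam) (Nm + mu'))
    (hnzY : ∃ q, ∃ y : Y q, y ≠ 0) (hd : 0 < d)
    {F F' : RSp k s t X (fun q => Fin d → Y q)}
    {φ : ∀ q, ((Fin d → Y q) × X q) →ₗ[k] ((Fin d → Y q) × X q)}
    (hφ : IsRHom k s t (BExt k s t (piRep s t d (Mm + lam)) (Nm + mu) F)
      (BExt k s t (piRep s t d (Mm + lam')) (Nm + mu') F') φ)
    (hb : ∀ q, Function.Bijective (φ q)) :
    RIso k s t (Nm + mu) (Nm + mu') ∧ RIso k s t (Mm + lam) (Mm + lam') := by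
  set P : RSp k s t (fun q => Fin d → Y q) (fun q => Fin d → Y q) :=
    piRep s t d (Mm + lam) with hPdef
  set P' : RSp k s t (fun q => Fin d → Y q) (fun q => Fin d → Y q) :=
    piRep s t d (Mm + lam') with hP'def
  set Nn : RSp k s t X X := Nm + mu with hNndef
  set Nn' : RSp k s t X X := Nm + mu' with hNn'def
  set Aφ : ∀ q, (Fin d → Y q) →ₗ[k] (Fin d → Y q) := fun q =>
    (LinearMap.fst k _ _).comp ((φ q).comp (LinearMap.inl k _ _)) with hAdef
  set Bφ : ∀ q, X q →ₗ[k] (Fin d → Y q) := fun q =>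
    (LinearMap.fst k _ _).comp ((φ q).comp (LinearMap.inr k _ _)) with hBdef
  set Cφ : ∀ q, (Fin d → Y q) →ₗ[k] X q := fun q =>
    (LinearMap.snd k _ _).comp ((φ q).comp (LinearMap.inl k _ _)) with hCdef
  set Dφ : ∀ q, X q →ₗ[k] X q := fun q =>
    (LinearMap.snd k _ _).comp ((φ q).comp (LinearMap.inr k _ _)) with hDdef
  have hdec : ∀ q (y : Fin d → Y q) (x : X q),
      φ q (y, x) = (Aφ q y + Bφ q x, Cφ q y + Dφ q x) := by
    intro q y x
    have h : ((y, x) : (Fin d → Y q) × X q) = (y, 0) + (0, x) := by simp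
    rw [h, map_add]
    rfl
  have hrel : ∀ a (z : (Fin d → Y (s a)) × X (s a)),
      φ (t a) (P a z.1 + F a z.2, Nn a z.2)
        = (P' a (φ (s a) z).1 + F' a (φ (s a) z).2, Nn' a (φ (s a) z).2) := by
    intro a z
    exact LinearMap.congr_fun (hφ a) z
  have hrel1 : ∀ a (y : Fin d → Y (s a)),
      (Aφ (t a)) (P a y) = P' a (Aφ (s a) y) + F' a (Cφ (s a) y)
        ∧ (Cφ (t a)) (P a y) = Nn' a (Cφ (s a) y) := by
    intro a y
    have h := hrel a (y, 0)
    simp only [map_zero, add_zero] at h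
    rw [hdec (s a) y 0, hdec (t a) (P a y) 0] at h
    simp only [map_zero, add_zero] at h
    exact ⟨congrArg Prod.fst h, congrArg Prod.snd h⟩
  have hCmor : IsRHom k s t P Nn' Cφ := by
    intro a
    refine LinearMap.ext fun y => ?_
    exact (hrel1 a y).2
  have hC0 : ∀ q, Cφ q = 0 := by
    have h := homZero_pi hHom0 Cφ hCmor
    exact fun q => congrFun h q
  have hrel2 : ∀ a (x : X (s a)), (Dφ (t a)) (Nn a x) = Nn' a (Dφ (s a) x) := by
    intro a x
    have h := hrel a (0, x)
    simp only [map_zero, zero_add] at h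
    rw [hdec (s a) 0 x, hdec (t a) (F a x) (Nn a x)] at h
    simp only [map_zero, zero_add, hC0, LinearMap.zero_apply] at h
    exact congrArg Prod.snd h
  have hDmor : IsRHom k s t Nn Nn' Dφ := by
    intro a
    refine LinearMap.ext fun x => ?_
    exact hrel2 a x
  have hAmor : IsRHom k s t P P' Aφ := by
    intro a
    refine LinearMap.ext fun y => ?_
    have h := (hrel1 a y).1
    rw [hC0, LinearMap.zero_apply, map_zero, add_zero] at h
    exact h
  have hDsurj : ∀ q, Function.Surjective (Dφ q) := by
    intro q x₀
    obtain ⟨z, hz⟩ := (hb q).2 (0, x₀)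
    refine ⟨z.2, ?_⟩
    have h := congrArg Prod.snd hz
    rw [show z = (z.1, z.2) from rfl, hdec q z.1 z.2] at h
    rw [hC0, LinearMap.zero_apply, zero_add] at h
    exact h
  have hDbij : ∀ q, Function.Bijective (Dφ q) :=
    fun q => ⟨LinearMap.injective_iff_surjective.2 (hDsurj q), hDsurj q⟩
  have hAinj : ∀ q, Function.Injective (Aφ q) := by
    intro q ya yb h
    have h2 : φ q (ya, 0) = φ q (yb, 0) := by
      rw [hdec q ya 0, hdec q yb 0, hC0]
      simp [h]
    have h3 := (hb q).1 h2
    exact congrArg Prod.fst h3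
  have hAbij : ∀ q, Function.Bijective (Aφ q) :=
    fun q => ⟨hAinj q, LinearMap.injective_iff_surjective.1 (hAinj q)⟩
  exact ⟨⟨Dφ, hDmor, hDbij⟩, pi_iso_cancel hd hSchM hnzY hAmor hAbij⟩

/-- The submodule of admissible Schubert coefficients. -/
def coefSub (k : Type) [Field k] {d n : ℕ} (I : Fin d → Fin n) :
    Submodule k (Fin d → Fin n → k) where
  carrier := {c | (∀ j m, ¬ m < I j → c j m = 0) ∧ (∀ j m, m ∈ Set.range I → c j m = 0)}
  add_mem' := by
    rintro a b ⟨ha1, ha2⟩ ⟨hb1, hb2⟩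
    exact ⟨fun j m h => by simp [ha1 j m h, hb1 j m h],
           fun j m h => by simp [ha2 j m h, hb2 j m h]⟩
  zero_mem' := ⟨fun _ _ _ => rfl, fun _ _ _ => rfl⟩
  smul_mem' := by
    rintro r a ⟨ha1, ha2⟩
    exact ⟨fun j m h => by simp [ha1 j m h], fun j m h => by simp [ha2 j m h]⟩

/-- The linear parametrization of the Schubert cell by coefficients. -/
def LofC (s t : A → V) (e : Fin n → RSp k s t X Y) (d : ℕ) :
    (Fin d → Fin n → k) →ₗ[k] RSp k s t X (fun q => Fin d → Y q) where
  toFun c := fun a => LinearMap.pi (fun j => ∑ m, c j m • e m a)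
  map_add' c c' := by
    funext a
    refine LinearMap.ext fun x => ?_
    funext j
    show ((LinearMap.pi fun j => ∑ m, (c j m + c' j m) • e m a) x) j = _
    simp only [LinearMap.pi_apply, LinearMap.sum_apply, LinearMap.smul_apply, Pi.add_apply,
      LinearMap.add_apply, add_smul, Finset.sum_add_distrib]
  map_smul' r c := by
    funext a
    refine LinearMap.ext fun x => ?_
    funext j
    show ((LinearMap.pi fun j => ∑ m, (r * c j m) • e m a) x) j = _
    simp only [LinearMap.pi_apply, LinearMap.sum_apply, LinearMap.smul_apply, Pi.smul_apply,
      RingHom.id_apply, mul_smul, Finset.smul_sum]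

/-- `piRep` as a linear map. -/
def piRepL (s t : A → V) (Y : V → Type)
    [∀ q, AddCommGroup (Y q)] [∀ q, Module k (Y q)] (d : ℕ) :
    RSp k s t Y Y →ₗ[k] RSp k s t (fun q => Fin d → Y q) (fun q => Fin d → Y q) where
  toFun := piRep s t d
  map_add' m m' := by
    funext a
    refine LinearMap.ext fun v => ?_
    funext j
    simp only [piRep, LinearMap.pi_apply, LinearMap.comp_apply, LinearMap.proj_apply,
      Pi.add_apply, LinearMap.add_apply]
  map_smul' r m := by
    funext a
    refine LinearMap.ext fun v => ?_
    funext j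
    simp only [piRep, LinearMap.pi_apply, LinearMap.comp_apply, LinearMap.proj_apply,
      Pi.smul_apply, LinearMap.smul_apply, RingHom.id_apply]

/-- Product of two submodules is linearly equivalent to the product of the subtypes. -/
def submoduleProdEquiv {M N : Type} [AddCommGroup M] [Module k M] [AddCommGroup N] [Module k N]
    (p : Submodule k M) (q : Submodule k N) : (p.prod q) ≃ₗ[k] p × q where
  toFun z := (⟨z.1.1, z.2.1⟩, ⟨z.1.2, z.2.2⟩)
  invFun z := ⟨(z.1.1, z.2.1), ⟨z.1.2, z.2.2⟩⟩
  left_inv z := rfl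
  right_inv z := rfl
  map_add' z w := rfl
  map_smul' r z := rfl

end Aux6

/-- Theorem `cells`.  Given cells of Schurian representations
`(M,U_M)`, `(N,U_N)` with `Hom(M(λ),N(μ)) = 0`, a universal subspace
`U_{N,M} ⊆ R(N,M)` with basis `e_1,…,e_n`, and `1 ≤ d ≤ n`, every strictly increasing
`I : Fin d → Fin n` yields a cell `C_I = (B_I, {(τ, λ⊗id, μ)})`: all the
representations `B_I(τ, λ⊗id, μ)`, `τ ∈ A_I`, `λ ∈ U_M`, `μ ∈ U_N`, are
indecomposable; isomorphism forces equality of parameters and of `I`; the parameter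
space has dimension `dim U_M + dim U_N + dim A_I`; and `{C_I}_I` is a mosaic. -/
theorem statement6
    (Mm : RSp k s t Y Y) (Nm : RSp k s t X X)
    (UM : Submodule k (RSp k s t Y Y)) (UN : Submodule k (RSp k s t X X))
    -- (M, U_M) is a cell of Schurian representations
    (hInjM : ∀ lam ∈ UM, ∀ lam' ∈ UM,
      lam - lam' ∈ LinearMap.range (dMap k s t Mm Mm) → lam = lam')
    (hStrongM : Strong k s t Mm UM) (hSepM : Separating k s t Mm UM)
    (hSchurM : ∀ lam ∈ UM, EndTrivial k s t (Mm + lam))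
    -- (N, U_N) is a cell of Schurian representations
    (hInjN : ∀ mu ∈ UN, ∀ mu' ∈ UN,
      mu - mu' ∈ LinearMap.range (dMap k s t Nm Nm) → mu = mu')
    (hStrongN : Strong k s t Nm UN) (hSepN : Separating k s t Nm UN)
    (hSchurN : ∀ mu ∈ UN, EndTrivial k s t (Nm + mu))
    -- Hom(M(λ), N(μ)) = 0
    (hHom : ∀ lam ∈ UM, ∀ mu ∈ UN, HomZero k s t (Mm + lam) (Nm + mu))
    -- U_{N,M} universal for (U_M, U_N), with basis e_1, …, e_n
    (UNM : Submodule k (RSp k s t X Y))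
    (huniv : ∀ lam ∈ UM, ∀ mu ∈ UN, ∀ tau ∈ UNM, ∀ tau' ∈ UNM,
      tau - tau' ∈ LinearMap.range (dMap k s t (Nm + mu) (Mm + lam)) → tau = tau')
    (n : ℕ) (e : Fin n → RSp k s t X Y)
    (hbasis : LinearIndependent k e ∧ Submodule.span k (Set.range e) = UNM)
    (d : ℕ) (hd : 1 ≤ d) (hdn : d ≤ n) :
    -- (1) indecomposability
    (∀ I : Fin d → Fin n, StrictMono I →
      ∀ tau ∈ AI s t n d e I, ∀ lam ∈ UM, ∀ mu ∈ UN,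
        Indec k s t (BExt k s t (piRep s t d (Mm + lam)) (Nm + mu)
          (EI s t n d e I + tau))) ∧
    -- (2) parameters (and the index I) are determined by the isomorphism class
    (∀ I I' : Fin d → Fin n, StrictMono I → StrictMono I' →
      ∀ tau ∈ AI s t n d e I, ∀ lam ∈ UM, ∀ mu ∈ UN,
      ∀ tau' ∈ AI s t n d e I', ∀ lam' ∈ UM, ∀ mu' ∈ UN,
        RIso k s t (BExt k s t (piRep s t d (Mm + lam)) (Nm + mu)
            (EI s t n d e I + tau))
          (BExt k s t (piRep s t d (Mm + lam')) (Nm + mu')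
            (EI s t n d e I' + tau')) →
        I = I' ∧ tau = tau' ∧ lam = lam' ∧ mu = mu') ∧
    -- (3) the dimension of the cell C_I
    (∀ I : Fin d → Fin n, StrictMono I →
      ∃ WI : Submodule k (RSp k s t X (fun q => Fin d → Y q)),
      ∃ P : Submodule k ((RSp k s t X (fun q => Fin d → Y q)) ×
        (RSp k s t (fun q => Fin d → Y q) (fun q => Fin d → Y q)) × (RSp k s t X X)),
        (WI : Set _) = AI s t n d e I ∧
        (P : Set ((RSp k s t X (fun q => Fin d → Y q)) ×
            (RSp k s t (fun q => Fin d → Y q) (fun q => Fin d → Y q)) ×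
            (RSp k s t X X))) = {p | p.1 ∈ AI s t n d e I ∧
          (∃ lam ∈ UM, p.2.1 = piRep s t d lam) ∧ p.2.2 ∈ UN} ∧
        Module.finrank k P =
          Module.finrank k UM + Module.finrank k UN + Module.finrank k WI) := by
  refine ⟨?_, ?_, ?_⟩
  · -- (1) indecomposability
    intro I hI tau hAI lam hlam mu hmu
    obtain ⟨c, hc0, hcr, hτ⟩ := hAI
    exact indec_of huniv hbasis.1 hbasis.2 hlam hmu (hSchurM lam hlam) (hSchurN mu hmu)
      (hHom lam hlam mu hmu) (hStrongN mu hmu).1 hI hcr hτ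
  · -- (2) parameters determined
    intro I I' hI hI' tau hAI lam hlam mu hmu tau' hAI' lam' hlam' mu' hmu' hiso
    obtain ⟨c, hc0, hcr, hτ⟩ := hAI
    obtain ⟨c'', hc0', hcr', hτ'⟩ := hAI'
    obtain ⟨φ, hφ, hb⟩ := hiso
    have hnzY : ∃ q, ∃ y : Y q, y ≠ 0 := (hStrongM lam hlam).1
    obtain ⟨hNiso, hMiso⟩ := iso_pre (hSchurM lam hlam) (hHom lam hlam mu' hmu') hnzY hd hφ hb
    have hmuE : mu = mu' := hSepN mu hmu mu' hmu' hNiso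
    have hlamE : lam = lam' := hSepM lam hlam lam' hlam' hMiso
    subst hmuE
    subst hlamE
    obtain ⟨C, c', h1, h2⟩ := hom_analysis huniv hbasis.1 hbasis.2 hlam hmu
      (hSchurM lam hlam) (hSchurN mu hmu) (hHom lam hlam mu hmu) hτ hτ' hφ
    obtain ⟨q₀, x₀, hx₀⟩ := (hStrongN mu hmu).1
    have hc'ne : c' ≠ 0 := by
      obtain ⟨z, hz⟩ := (hb q₀).2 (0, x₀)
      have hz2 : c' • z.2 = x₀ := by
        have h := congrArg Prod.snd hz
        rw [show z = (z.1, z.2) from rfl, h1 q₀ z.1 z.2] at h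
        exact h
      intro h
      exact hx₀ (by rw [← hz2, h, zero_smul])
    obtain ⟨ψ, hψ, hbψ⟩ := rIso_symm ⟨φ, hφ, hb⟩
    obtain ⟨D, c''', h1ψ, h2ψ⟩ := hom_analysis huniv hbasis.1 hbasis.2 hlam hmu
      (hSchurM lam hlam) (hSchurN mu hmu) (hHom lam hlam mu hmu) hτ' hτ hψ
    have hc'''ne : c''' ≠ 0 := by
      obtain ⟨z, hz⟩ := (hbψ q₀).2 (0, x₀)
      have hz2 : c''' • z.2 = x₀ := by
        have h := congrArg Prod.snd hz
        rw [show z = (z.1, z.2) from rfl, h1ψ q₀ z.1 z.2] at h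
        exact h
      intro h
      exact hx₀ (by rw [← hz2, h, zero_smul])
    have hsub1 : ∀ j, I' j ∈ Set.range I :=
      range_lemma hI hI' hc0 hcr hc0' hcr' hc'ne h2
    have hsub2 : ∀ j, I j ∈ Set.range I' :=
      range_lemma hI' hI hc0' hcr' hc0 hcr hc'''ne h2ψ
    have hrange : Set.range I = Set.range I' := by
      refine Set.Subset.antisymm ?_ ?_
      · rintro _ ⟨j, rfl⟩; exact hsub2 j
      · rintro _ ⟨j, rfl⟩; exact hsub1 j
    haveI hwf : WellFoundedLT (Fin d) := inferInstance
    have hII : I = I' := (StrictMono.range_inj hI hI').1 hrange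
    subst hII
    have hC : ∀ j m₀ : Fin d, C j m₀ = if j = m₀ then c' else 0 := by
      intro j m₀
      have h := h2 j (I m₀)
      rw [pivot_sum hI.injective hcr, pcoef_pivot hI.injective hcr'] at h
      rw [h, mul_ite, mul_one, mul_zero]
    have hpc : ∀ j m, pcoef I c j m = pcoef I c'' j m := by
      intro j m
      have h := h2 j m
      rw [Finset.sum_congr rfl (fun l _ => by rw [hC j l, ite_mul, zero_mul]),
        Finset.sum_ite_eq] at h
      simp only [Finset.mem_univ, if_true] at h
      exact mul_left_cancel₀ hc'ne h
    have hcc : c = c'' := by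
      funext j m
      have h := hpc j m
      unfold pcoef at h
      exact add_left_cancel h
    have htau : tau = tau' := by rw [hτ, hτ', hcc]
    exact ⟨rfl, htau, rfl, rfl⟩
  · -- (3) dimension count
    intro I hI
    set L := LofC s t e d with hLdef
    set WI : Submodule k (RSp k s t X (fun q => Fin d → Y q)) :=
      (coefSub k I).map L with hWIdef
    set pL := piRepL (k := k) s t Y d with hpLdef
    set P : Submodule k ((RSp k s t X (fun q => Fin d → Y q)) ×
        (RSp k s t (fun q => Fin d → Y q) (fun q => Fin d → Y q)) × (RSp k s t X X)) :=
      WI.prod ((UM.map pL).prod UN) with hPdef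
    have hWIcoe : (WI : Set _) = AI s t n d e I := by
      ext τ
      simp only [SetLike.mem_coe, hWIdef, Submodule.mem_map]
      constructor
      · rintro ⟨c, ⟨h1, h2⟩, rfl⟩
        exact ⟨c, h1, h2, rfl⟩
      · rintro ⟨c, h1, h2, rfl⟩
        exact ⟨c, ⟨h1, h2⟩, rfl⟩
    refine ⟨WI, P, hWIcoe, ?_, ?_⟩
    · ext p
      simp only [SetLike.mem_coe, hPdef, Submodule.mem_prod, Set.mem_setOf_eq]
      constructor
      · rintro ⟨hp1, hp2, hp3⟩
        refine ⟨by rw [← hWIcoe]; exact hp1, ?_, hp3⟩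
        obtain ⟨lam, hlam, hplam⟩ := Submodule.mem_map.1 hp2
        exact ⟨lam, hlam, hplam.symm⟩
      · rintro ⟨hp1, ⟨lam, hlam, hplam⟩, hp3⟩
        refine ⟨by rw [← hWIcoe] at hp1; exact hp1, ?_, hp3⟩
        exact Submodule.mem_map.2 ⟨lam, hlam, hplam.symm⟩
    · have hinj : Function.Injective pL := by
        intro m m' h
        funext a
        refine LinearMap.ext fun y => ?_
        have h1 := congrFun h a
        have h2 := congrFun (LinearMap.congr_fun h1 (fun _ => y)) ⟨0, hd⟩
        exact h2
      have hfr1 : Module.finrank k (UM.map pL) = Module.finrank k UM :=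
        (LinearEquiv.finrank_eq (Submodule.equivMapOfInjective pL hinj UM)).symm
      have e1 := submoduleProdEquiv (k := k) WI ((UM.map pL).prod UN)
      have e2 := submoduleProdEquiv (k := k) (UM.map pL) UN
      rw [hPdef]
      rw [LinearEquiv.finrank_eq e1, Module.finrank_prod, LinearEquiv.finrank_eq e2,
        Module.finrank_prod, hfr1]
      ring
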